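/- Let D ⊂ ℂⁿ and G ⊂ ℂᵐ be domains, let A ⊂ D and B ⊂ G be non-pluripolar subsets, and let X = 𝕏(D,A;G,B). If A and B are locally pluriregular, then the set X̂ = {(z,w) ∈ D×G : ω_{A,D}(z) + ω_{B,G}(w) < 1} is a domain, i.e. it is open and connected. -/

import Mathlib

open Set Filter Metric

/-- A function `u` with values in `EReal = ℝ ∪ {±∞}` is *plurisubharmonic* on an open set
`Ω` if it is upper semicontinuous on `Ω` and, along every complex line, it satisfies the
sub-mean / harmonic-majorization principle on closed discs contained in `Ω`:
whenever `u` is dominated on the boundary circle of such a disc by the real part of a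
(holomorphic) polynomial, it is dominated by it inside as well. -/
def PlurisubharmonicOn {E : Type*} [NormedAddCommGroup E] [NormedSpace ℂ E]
    (u : E → EReal) (Ω : Set E) : Prop :=
  UpperSemicontinuousOn u Ω ∧
    ∀ a b : E, (∀ lam : ℂ, ‖lam‖ ≤ 1 → a + lam • b ∈ Ω) →
      ∀ p : Polynomial ℂ,
        (∀ lam : ℂ, ‖lam‖ = 1 → u (a + lam • b) ≤ ((p.eval lam).re : EReal)) →
        ∀ lam : ℂ, ‖lam‖ < 1 → u (a + lam • b) ≤ ((p.eval lam).re : EReal)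

/-- A set `P ⊆ ℂⁿ` is *pluripolar* if it is contained in the `-∞`-locus of a
plurisubharmonic function (on all of the space) which is not identically `-∞`.
For `E = ℂ` this is the notion of a *polar* set. -/
def Pluripolar {E : Type*} [NormedAddCommGroup E] [NormedSpace ℂ E] (P : Set E) : Prop :=
  ∃ u : E → EReal, PlurisubharmonicOn u Set.univ ∧ (∃ z, u z ≠ ⊥) ∧ ∀ z ∈ P, u z = ⊥

/-- The relative extremal function `h_{A,Ω}(z) = sup { u(z) : u psh on Ω, u ≤ 1 on Ω, u ≤ 0 on A }`
(the supremum being taken over real-valued plurisubharmonic functions). -/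
noncomputable def relExtremal {E : Type*} [NormedAddCommGroup E] [NormedSpace ℂ E]
    (A Ω : Set E) (z : E) : ℝ :=
  sSup { t : ℝ | ∃ u : E → ℝ,
    PlurisubharmonicOn (fun x => ((u x : ℝ) : EReal)) Ω ∧
    (∀ x ∈ Ω, u x ≤ 1) ∧ (∀ x ∈ A, u x ≤ 0) ∧ t = u z }

/-- The upper semicontinuous regularization `h*_{A,Ω}` of the relative extremal function:
`h*_{A,Ω}(z) = limsup_{Ω ∋ w → z} h_{A,Ω}(w)`. -/
noncomputable def relExtremalStar {E : Type*} [NormedAddCommGroup E] [NormedSpace ℂ E]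
    (A Ω : Set E) (z : E) : ℝ :=
  Filter.limsup (relExtremal A Ω) (nhdsWithin z Ω)

/-- `ω_{A,Ω} = lim_k h*_{A ∩ Ω_k, Ω_k}` for an exhaustion `(Ω_k)` of `Ω` by relatively compact
open subsets; since these numbers decrease as the subset grows, the limit (independent of the
exhaustion) equals the infimum over all relatively compact open subsets `K ⊆ Ω` containing the
point. -/
noncomputable def omegaExtr {E : Type*} [NormedAddCommGroup E] [NormedSpace ℂ E]
    (A Ω : Set E) (z : E) : ℝ :=
  sInf { t : ℝ | ∃ K : Set E, IsOpen K ∧ IsCompact (closure K) ∧ closure K ⊆ Ω ∧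
    z ∈ K ∧ t = relExtremalStar (A ∩ K) K z }

/-- `A` is *locally pluriregular* if `h*_{A ∩ Ω, Ω}(a) = 0` for every `a ∈ A` and every open
neighborhood `Ω` of `a`.  For subsets of `ℂ` one says *locally regular*. -/
def LocallyPluriregular {E : Type*} [NormedAddCommGroup E] [NormedSpace ℂ E]
    (A : Set E) : Prop :=
  ∀ a ∈ A, ∀ Ω : Set E, IsOpen Ω → a ∈ Ω → relExtremalStar (A ∩ Ω) Ω a = 0

/-- `M` is an *analytic subset* of the open set `U` if, locally on `U`, it is the common
zero set of a family of holomorphic functions. -/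
def IsAnalyticSubset {E : Type*} [NormedAddCommGroup E] [NormedSpace ℂ E]
    (U M : Set E) : Prop :=
  M ⊆ U ∧ ∀ p ∈ U, ∃ V : Set E, IsOpen V ∧ p ∈ V ∧ V ⊆ U ∧
    ∃ (ι : Type) (g : ι → E → ℂ), (∀ i, DifferentiableOn ℂ (g i) V) ∧
      M ∩ V = {x ∈ V | ∀ i, g i x = 0}

/-- An analytic subset `M` of `U` is *pure 1-codimensional* (for subsets of `ℂ²`,
*pure 1-dimensional*) if near each of its points it is the zero set of a single holomorphic
function which does not vanish identically (on a connected neighborhood). -/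
def IsPureCodimOneAnalyticSubset {E : Type*} [NormedAddCommGroup E] [NormedSpace ℂ E]
    (U M : Set E) : Prop :=
  IsAnalyticSubset U M ∧ ∀ p ∈ M, ∃ V : Set E, IsOpen V ∧ IsPreconnected V ∧ p ∈ V ∧ V ⊆ U ∧
    ∃ g : E → ℂ, DifferentiableOn ℂ g V ∧ (∃ x ∈ V, g x ≠ 0) ∧ M ∩ V = {x ∈ V | g x = 0}


set_option linter.unusedSectionVars false
set_option maxHeartbeats 1000000

section Basics
variable {E : Type*} [NormedAddCommGroup E] [NormedSpace ℂ E]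

/-- Minimum principle for real parts of polynomials on bounded open sets. -/
theorem minRe_frontier {O : Set ℂ} (hO : Bornology.IsBounded O) (p : Polynomial ℂ) {c : ℝ}
    (hfr : ∀ μ ∈ frontier O, c ≤ (p.eval μ).re) : ∀ z ∈ O, c ≤ (p.eval z).re := by
  intro z hz
  have hd : DiffContOnCl ℂ (fun w => Complex.exp (-(p.eval w))) O :=
    ((Complex.differentiable_exp.comp (p.differentiable.neg)).diffContOnCl)
  have hb : ∀ w ∈ frontier O, ‖Complex.exp (-(p.eval w))‖ ≤ Real.exp (-c) := by
    intro w hw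
    rw [Complex.norm_exp]
    exact Real.exp_le_exp.2 (by simpa using neg_le_neg (hfr w hw))
  have := Complex.norm_le_of_forall_mem_frontier_norm_le hO hd hb (subset_closure hz)
  rw [Complex.norm_exp] at this
  have := Real.exp_le_exp.1 this
  simpa using this

theorem minRe_circle (p : Polynomial ℂ) {c : ℝ}
    (hfr : ∀ μ : ℂ, ‖μ‖ = 1 → c ≤ (p.eval μ).re) :
    ∀ z : ℂ, ‖z‖ < 1 → c ≤ (p.eval z).re := by
  intro z hz
  refine minRe_frontier (Metric.isBounded_ball (x := (0:ℂ)) (r := 1)) p ?_ z (by simpa using hz)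
  intro μ hμ
  rw [frontier_ball (0:ℂ) one_ne_zero] at hμ
  exact hfr μ (by simpa using hμ)

/-- Coercion of a real usc function to `EReal` is usc. -/
theorem usc_coe {u : E → ℝ} {s : Set E} (h : UpperSemicontinuousOn u s) :
    UpperSemicontinuousOn (fun x => ((u x : ℝ) : EReal)) s := by
  intro x hx y hy
  rcases EReal.lt_iff_exists_real_btwn.1 hy with ⟨r, hr1, hr2⟩
  have : u x < r := by
    have hr1' : ((u x : ℝ) : EReal) < (r : EReal) := hr1
    exact_mod_cast hr1'
  filter_upwards [h x hx r this] with z hz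
  exact lt_of_lt_of_le (by exact_mod_cast hz) hr2.le

theorem psh_const (c : ℝ) (Ω : Set E) :
    PlurisubharmonicOn (fun _ : E => ((c : ℝ) : EReal)) Ω := by
  constructor
  · intro x hx y hy
    exact Filter.Eventually.of_forall fun _ => hy
  · intro a b _ p hcirc lam hlam
    have h0 : ∀ μ : ℂ, ‖μ‖ = 1 → c ≤ (p.eval μ).re := by
      intro μ hμ
      have h1 : ((c:ℝ) : EReal) ≤ (((p.eval μ).re : ℝ) : EReal) := hcirc μ hμ
      exact_mod_cast h1
    show ((c:ℝ) : EReal) ≤ (((p.eval lam).re : ℝ) : EReal)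
    exact_mod_cast (minRe_circle p h0 lam hlam)

end Basics

section RelExtremal
variable {E : Type*} [NormedAddCommGroup E] [NormedSpace ℂ E]

/-- The defining set of `relExtremal`. -/
def admSet (B K : Set E) (z : E) : Set ℝ :=
  { t : ℝ | ∃ u : E → ℝ,
    PlurisubharmonicOn (fun x => ((u x : ℝ) : EReal)) K ∧
    (∀ x ∈ K, u x ≤ 1) ∧ (∀ x ∈ B, u x ≤ 0) ∧ t = u z }

theorem relExtremal_eq (B K : Set E) (z : E) : relExtremal B K z = sSup (admSet B K z) := rfl

theorem zero_mem_admSet (B K : Set E) (z : E) : (0:ℝ) ∈ admSet B K z :=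
  ⟨fun _ => 0, psh_const 0 K, fun _ _ => zero_le_one, fun _ _ => le_refl 0, rfl⟩

theorem admSet_bddAbove {B K : Set E} {z : E} (hz : z ∈ K) : BddAbove (admSet B K z) := by
  refine ⟨1, ?_⟩
  rintro t ⟨u, _, h1, _, rfl⟩
  exact h1 z hz

theorem relExtremal_nonneg (B K : Set E) (z : E) : 0 ≤ relExtremal B K z := by
  by_cases hb : BddAbove (admSet B K z)
  · exact le_csSup hb (zero_mem_admSet B K z)
  · rw [relExtremal_eq, Real.sSup_of_not_bddAbove hb]

theorem relExtremal_le_one {B K : Set E} {z : E} (hz : z ∈ K) : relExtremal B K z ≤ 1 :=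
  Real.sSup_le (by rintro t ⟨u, _, h1, _, rfl⟩; exact h1 z hz) zero_le_one

theorem le_relExtremal {B K : Set E} {u : E → ℝ}
    (hpsh : PlurisubharmonicOn (fun x => ((u x : ℝ) : EReal)) K)
    (h1 : ∀ x ∈ K, u x ≤ 1) (h0 : ∀ x ∈ B, u x ≤ 0) {z : E} (hz : z ∈ K) :
    u z ≤ relExtremal B K z :=
  le_csSup (admSet_bddAbove hz) ⟨u, hpsh, h1, h0, rfl⟩

theorem relExtremal_le {B K : Set E} {z : E} {c : ℝ} (hc : 0 ≤ c)
    (h : ∀ u : E → ℝ, PlurisubharmonicOn (fun x => ((u x : ℝ) : EReal)) K →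
      (∀ x ∈ K, u x ≤ 1) → (∀ x ∈ B, u x ≤ 0) → u z ≤ c) :
    relExtremal B K z ≤ c :=
  Real.sSup_le (by rintro t ⟨u, hu, h1, h0, rfl⟩; exact h u hu h1 h0) hc

/-- The eventual-bound set whose `sInf` is `relExtremalStar`. -/
def starSet (B K : Set E) (z : E) : Set ℝ :=
  { t : ℝ | ∀ᶠ y in nhdsWithin z K, relExtremal B K y ≤ t }

theorem relStar_eq (B K : Set E) (z : E) : relExtremalStar B K z = sInf (starSet B K z) :=
  limsup_eq

theorem one_mem_starSet (B K : Set E) (z : E) : (1:ℝ) ∈ starSet B K z := by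
  filter_upwards [self_mem_nhdsWithin] with y hy
  exact relExtremal_le_one hy

theorem starSet_bddBelow {B K : Set E} {z : E} (hz : z ∈ K) (hK : IsOpen K) :
    BddBelow (starSet B K z) := by
  haveI hne : (nhdsWithin z K).NeBot := mem_closure_iff_nhdsWithin_neBot.1 (subset_closure hz)
  refine ⟨0, ?_⟩
  intro t ht
  rcases Filter.Eventually.exists (show ∀ᶠ y in nhdsWithin z K, relExtremal B K y ≤ t from ht) with ⟨y, hy⟩
  exact le_trans (relExtremal_nonneg B K y) hy

theorem relStar_nonneg {B K : Set E} {z : E} (hz : z ∈ K) (hK : IsOpen K) :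
    0 ≤ relExtremalStar B K z := by
  rw [relStar_eq]
  haveI hne : (nhdsWithin z K).NeBot := mem_closure_iff_nhdsWithin_neBot.1 (subset_closure hz)
  refine le_csInf ⟨1, one_mem_starSet B K z⟩ (fun t ht => ?_)
  rcases Filter.Eventually.exists (show ∀ᶠ y in nhdsWithin z K, relExtremal B K y ≤ t from ht) with ⟨y, hy⟩
  exact le_trans (relExtremal_nonneg B K y) hy

theorem relStar_le_one {B K : Set E} {z : E} (hz : z ∈ K) (hK : IsOpen K) :
    relExtremalStar B K z ≤ 1 := by
  rw [relStar_eq]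
  exact csInf_le (starSet_bddBelow hz hK) (one_mem_starSet B K z)

theorem relExtremal_le_relStar {B K : Set E} {z : E} (hz : z ∈ K) (hK : IsOpen K) :
    relExtremal B K z ≤ relExtremalStar B K z := by
  rw [relStar_eq]
  refine le_csInf ⟨1, one_mem_starSet B K z⟩ (fun t ht => ?_)
  have : pure z ≤ nhdsWithin z K := le_inf (pure_le_nhds z) (le_principal_iff.2 hz)
  exact this ht

/-- local propagation of a strict upper bound for `relExtremalStar`. -/
theorem relStar_lt {B K : Set E} (hK : IsOpen K) {z : E} (hz : z ∈ K) {c : ℝ}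
    (h : relExtremalStar B K z < c) :
    ∃ V : Set E, IsOpen V ∧ z ∈ V ∧ ∃ t : ℝ, t < c ∧
      (∀ y ∈ V ∩ K, relExtremal B K y ≤ t) ∧
      (∀ y ∈ V ∩ K, relExtremalStar B K y ≤ t) := by
  rw [relStar_eq] at h
  rcases (csInf_lt_iff (starSet_bddBelow hz hK) ⟨1, one_mem_starSet B K z⟩).1 h
    with ⟨t, ht, htc⟩
  rcases mem_nhdsWithin.1 ht with ⟨V, hVopen, hzV, hV⟩
  refine ⟨V, hVopen, hzV, t, htc, fun y hy => hV hy, ?_⟩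
  intro y hy
  rw [relStar_eq]
  refine csInf_le (starSet_bddBelow hy.2 hK) ?_
  have : V ∈ nhdsWithin y K := mem_nhdsWithin_of_mem_nhds (hVopen.mem_nhds hy.1)
  filter_upwards [this, self_mem_nhdsWithin] with w hw hwK
  exact hV ⟨hw, hwK⟩

theorem relStar_usc {B K : Set E} (hK : IsOpen K) :
    UpperSemicontinuousOn (relExtremalStar B K) K := by
  intro z hz c hc
  rcases relStar_lt hK hz hc with ⟨V, hVopen, hzV, t, htc, _, hVstar⟩
  have : V ∈ nhdsWithin z K := mem_nhdsWithin_of_mem_nhds (hVopen.mem_nhds hzV)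
  filter_upwards [this, self_mem_nhdsWithin] with w hw hwK
  exact lt_of_le_of_lt (hVstar w ⟨hw, hwK⟩) htc

theorem relStar_empty {K : Set E} (hK : IsOpen K) {z : E} (hz : z ∈ K) {c : ℝ} (hc : c ≤ 1)
    (h : relExtremalStar (∅ : Set E) K z < c) : False := by
  -- constants just below c are admissible when the constraint set is empty
  rcases relStar_lt hK hz h with ⟨V, hVopen, hzV, t, htc, hVh, _⟩
  have hz' : z ∈ V ∩ K := ⟨hzV, hz⟩
  have hc0 : 0 < c := lt_of_le_of_lt (relStar_nonneg hz hK) h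
  have hmax : max t 0 < c := max_lt htc hc0
  set d := (max t 0 + c)/2 with hd
  have hdlt : max t 0 < d := by rw [hd]; linarith [hmax]
  have hdc : d < c := by rw [hd]; linarith [hmax]
  have hd1 : d ≤ 1 := le_trans hdc.le hc
  have : d ≤ relExtremal (∅ : Set E) K z :=
    le_relExtremal (psh_const d K) (fun _ _ => hd1) (fun x hx => hx.elim) hz
  have h2 := hVh z hz'
  have : d ≤ t := le_trans this h2
  have : d ≤ max t 0 := le_trans this (le_max_left t 0)
  exact absurd this (not_le.2 hdlt)

end RelExtremal

section ArcPoly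
open Polynomial Finset

theorem exists_good_k {ρ : ℝ} (h0 : 0 ≤ ρ) (h1 : ρ < 1) :
    ∃ k : ℕ, 0 < k ∧ (2 * (k:ℝ) + 1) * ρ ^ (2*k) < 1/2 := by
  have hsum : Summable (fun n : ℕ => (n:ℝ)^1 * ρ ^ n) :=
    summable_pow_mul_geometric_of_norm_lt_one 1 (by rwa [Real.norm_eq_abs, abs_of_nonneg h0])
  have h2 : Filter.Tendsto (fun n : ℕ => (n:ℝ)^1 * ρ ^ n) Filter.atTop (nhds 0) :=
    hsum.tendsto_atTop_zero
  have h3 : Filter.Tendsto (fun n : ℕ => ρ ^ n) Filter.atTop (nhds 0) :=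
    tendsto_pow_atTop_nhds_zero_of_lt_one h0 h1
  have h4 : Filter.Tendsto (fun n : ℕ => (n:ℝ)^1 * ρ ^ n + ρ ^ n) Filter.atTop (nhds 0) := by
    simpa using h2.add h3
  have h5 := h4.eventually_lt_const (show (0:ℝ) < 1/2 by norm_num)
  rcases Filter.eventually_atTop.1 h5 with ⟨N, hN⟩
  refine ⟨N + 1, Nat.succ_pos N, ?_⟩
  have := hN (2*(N+1)) (by omega)
  have hcast : ((2*(N+1) : ℕ) : ℝ) = 2 * ((N+1 : ℕ):ℝ) := by push_cast; ring
  calc (2 * ((N+1:ℕ):ℝ) + 1) * ρ ^ (2*(N+1))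
      = ((2*(N+1):ℕ):ℝ)^1 * ρ ^ (2*(N+1)) + ρ ^ (2*(N+1)) := by rw [hcast]; ring
    _ < 1/2 := this

theorem arc_poly {α δ : ℝ} (hα0 : 0 < α) (hαπ : α < Real.pi) (hδ : 0 < δ) :
    ∃ p : Polynomial ℂ,
      (∀ θ : ℝ, 1 - δ ≤ (p.eval (Complex.exp (θ * Complex.I))).re) ∧
      (∀ θ : ℝ, α ≤ |θ| → |θ| ≤ Real.pi → 1 ≤ (p.eval (Complex.exp (θ * Complex.I))).re) ∧
      (p.eval 0).re < 1 := by
  have hπ := Real.pi_pos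
  set ρ : ℝ := Real.cos (α/2) with hρdef
  have hρ0 : 0 < ρ := Real.cos_pos_of_mem_Ioo ⟨by linarith, by linarith⟩
  have hρ1 : ρ < 1 := by
    have h := Real.cos_lt_cos_of_nonneg_of_le_pi (le_refl 0) (by linarith) (by linarith : (0:ℝ) < α/2)
    simpa using h
  obtain ⟨k, hk0, hkρ⟩ := exists_good_k hρ0.le hρ1
  -- the kernel polynomial q = 4⁻ᵏ (1+X)^{2k}
  set q : Polynomial ℂ := (Polynomial.C (4⁻¹:ℂ))^k * (1 + Polynomial.X)^(2*k) with hqdef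
  set r : ℕ → ℝ := fun d => (4⁻¹:ℝ)^k * ((2*k).choose d : ℝ) with hrdef
  have hr0 : ∀ d, 0 ≤ r d := fun d => by positivity
  have hqc : ∀ d, q.coeff d = ((r d : ℝ) : ℂ) := by
    intro d
    rw [hqdef, ← Polynomial.C_pow, Polynomial.coeff_C_mul, add_comm 1 Polynomial.X,
      Polynomial.coeff_X_add_one_pow]
    rw [hrdef]
    push_cast
    ring
  have hqdeg : q.natDegree < 2*k+1 := by
    have h1 : q.natDegree ≤ ((Polynomial.C (4⁻¹:ℂ))^k).natDegree + (((1 + Polynomial.X : Polynomial ℂ))^(2*k)).natDegree :=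
      Polynomial.natDegree_mul_le
    have h2 : ((Polynomial.C (4⁻¹:ℂ))^k).natDegree = 0 := by
      rw [← Polynomial.C_pow, Polynomial.natDegree_C]
    have h3 : (((1 + Polynomial.X : Polynomial ℂ))^(2*k)).natDegree ≤ 2*k * (1 + Polynomial.X : Polynomial ℂ).natDegree :=
      Polynomial.natDegree_pow_le
    have h4 : (1 + Polynomial.X : Polynomial ℂ).natDegree ≤ 1 := by
      refine le_trans (Polynomial.natDegree_add_le _ _) ?_
      simp
    have h5 : 2*k * (1 + Polynomial.X : Polynomial ℂ).natDegree ≤ 2*k*1 :=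
      Nat.mul_le_mul_left _ h4
    omega
  -- the symmetrized polynomial P
  set P : Polynomial ℂ := ∑ d ∈ Finset.range (2*k+1), Polynomial.C (q.coeff d) * Polynomial.X ^ (Nat.dist d k) with hPdef
  -- evaluation of P on the circle
  have hcosdist : ∀ (d : ℕ) (θ : ℝ), Real.cos ((Nat.dist d k : ℝ) * θ) = Real.cos (((d:ℝ) - k) * θ) := by
    intro d θ
    rcases le_total d k with h | h
    · rw [Nat.dist_eq_sub_of_le h]
      have : ((k - d : ℕ) : ℝ) = -(((d:ℝ) - k)) := by
        push_cast [Nat.cast_sub h]; ring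
      rw [this, neg_mul, Real.cos_neg]
    · rw [Nat.dist_eq_sub_of_le_right h]
      have : ((d - k : ℕ) : ℝ) = ((d:ℝ) - k) := by push_cast [Nat.cast_sub h]; ring
      rw [this]
  have hPre : ∀ θ : ℝ, (P.eval (Complex.exp (↑θ * Complex.I))).re = (Real.cos (θ/2))^(2*k) := by
    intro θ
    have e1 : (P.eval (Complex.exp (↑θ*Complex.I))).re
        = ∑ d ∈ Finset.range (2*k+1), r d * Real.cos (((d:ℝ) - k) * θ) := by
      rw [hPdef, Polynomial.eval_finset_sum, Complex.re_sum]
      refine Finset.sum_congr rfl (fun d hd => ?_)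
      rw [Polynomial.eval_mul, Polynomial.eval_C, Polynomial.eval_pow, Polynomial.eval_X, hqc d,
          Complex.re_ofReal_mul, ← Complex.exp_nat_mul]
      have harg : ((Nat.dist d k : ℂ)) * (↑θ * Complex.I) = ↑((Nat.dist d k : ℝ) * θ) * Complex.I := by
        push_cast; ring
      rw [harg, Complex.exp_ofReal_mul_I_re, hcosdist d θ]
    have e2 : ((Real.cos (θ/2) : ℝ) : ℂ)^(2*k)
        = Complex.exp (↑(-((k:ℝ) * θ)) * Complex.I) * q.eval (Complex.exp (↑θ*Complex.I)) := by
      have hhalf : Complex.exp (↑(-(θ/2)) * Complex.I) * Complex.exp (↑θ * Complex.I)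
          = Complex.exp (↑(θ/2) * Complex.I) := by
        rw [← Complex.exp_add]
        congr 1
        push_cast
        ring
      have hcos : ((Real.cos (θ/2) : ℝ) : ℂ)
          = 2⁻¹ * (Complex.exp (↑(θ/2) * Complex.I) + Complex.exp (↑(-(θ/2)) * Complex.I)) := by
        rw [Complex.ofReal_cos, Complex.ofReal_neg, neg_mul]
        have h2c := Complex.two_cos ((θ/2 : ℝ) : ℂ)
        rw [neg_mul] at h2c
        linear_combination (2⁻¹ : ℂ) * h2c
      rw [hcos, hqdef, Polynomial.eval_mul, Polynomial.eval_pow, Polynomial.eval_C,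
        Polynomial.eval_pow, Polynomial.eval_add, Polynomial.eval_one, Polynomial.eval_X]
      have hexpk : Complex.exp (↑(-((k:ℝ) * θ)) * Complex.I)
          = (Complex.exp (↑(-(θ/2)) * Complex.I))^(2*k) := by
        rw [← Complex.exp_nat_mul]
        congr 1
        push_cast
        ring
      rw [hexpk]
      rw [show ((2⁻¹ : ℂ) * (Complex.exp (↑(θ/2) * Complex.I) + Complex.exp (↑(-(θ/2)) * Complex.I)))^(2*k)
          = ((2⁻¹:ℂ))^(2*k) * ((Complex.exp (↑(θ/2) * Complex.I) + Complex.exp (↑(-(θ/2)) * Complex.I)))^(2*k) from by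
        rw [mul_pow]]
      have h4inv : ((2⁻¹:ℂ))^(2*k) = (4⁻¹:ℂ)^k := by
        rw [pow_mul]
        norm_num
      rw [h4inv]
      have hsum' : Complex.exp (↑(θ/2) * Complex.I) + Complex.exp (↑(-(θ/2)) * Complex.I)
          = Complex.exp (↑(-(θ/2)) * Complex.I) * (1 + Complex.exp (↑θ * Complex.I)) := by
        rw [mul_add, mul_one, hhalf]
        ring
      rw [hsum', mul_pow]
      ring
    have e3 : (Complex.exp (↑(-((k:ℝ) * θ)) * Complex.I) * q.eval (Complex.exp (↑θ*Complex.I))).re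
        = ∑ d ∈ Finset.range (2*k+1), r d * Real.cos (((d:ℝ) - k) * θ) := by
      rw [Polynomial.eval_eq_sum_range' hqdeg, Finset.mul_sum, Complex.re_sum]
      refine Finset.sum_congr rfl (fun d hd => ?_)
      rw [hqc d, ← Complex.exp_nat_mul]
      have harg : ((d:ℂ)) * (↑θ * Complex.I) = ↑((d:ℝ) * θ) * Complex.I := by push_cast; ring
      rw [harg]
      rw [show Complex.exp (↑(-((k:ℝ) * θ)) * Complex.I) * (↑(r d) * Complex.exp (↑((d:ℝ) * θ) * Complex.I))
          = ↑(r d) * (Complex.exp (↑(-((k:ℝ) * θ)) * Complex.I) * Complex.exp (↑((d:ℝ) * θ) * Complex.I)) from by ring]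
      rw [← Complex.exp_add]
      have harg2 : (↑(-((k:ℝ) * θ)) * Complex.I + ↑((d:ℝ) * θ) * Complex.I)
          = ↑(((d:ℝ) - k) * θ) * Complex.I := by push_cast; ring
      rw [harg2, Complex.re_ofReal_mul, Complex.exp_ofReal_mul_I_re]
    have e4 : (((Real.cos (θ/2) : ℝ) : ℂ)^(2*k)).re = (Real.cos (θ/2))^(2*k) := by
      rw [← Complex.ofReal_pow, Complex.ofReal_re]
    rw [e1, ← e3, ← e2, e4]
  -- value at the center
  have hP0 : (P.eval 0).re = r k := by
    rw [hPdef, Polynomial.eval_finset_sum]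
    rw [Finset.sum_eq_single k]
    · rw [Polynomial.eval_mul, Polynomial.eval_C, Polynomial.eval_pow, Polynomial.eval_X,
        Nat.dist_self, pow_zero, mul_one, hqc k, Complex.ofReal_re]
    · intro d hd hdk
      rw [Polynomial.eval_mul, Polynomial.eval_C, Polynomial.eval_pow, Polynomial.eval_X]
      have : Nat.dist d k ≠ 0 := fun h => hdk (Nat.eq_of_dist_eq_zero h)
      rw [zero_pow this, mul_zero]
    · intro hk
      exact absurd (Finset.mem_range.2 (by omega)) hk
  -- lower bound for the middle coefficient
  have hrk : (1:ℝ)/(2*(k:ℝ)+1) ≤ r k := by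
    have hnat : (4:ℕ)^k ≤ (2*k+1) * ((2*k).choose k) := by
      have hsum : ∑ i ∈ Finset.range (2*k+1), (2*k).choose i = 2^(2*k) := Nat.sum_range_choose (2*k)
      have hle : ∑ i ∈ Finset.range (2*k+1), (2*k).choose i ≤ (Finset.range (2*k+1)).card • ((2*k).choose k) := by
        refine Finset.sum_le_card_nsmul _ _ _ (fun i _ => ?_)
        have := Nat.choose_le_middle i (2*k)
        simpa [Nat.mul_div_cancel_left k (show 0 < 2 by norm_num)] using this
      rw [Finset.card_range, smul_eq_mul] at hle
      calc (4:ℕ)^k = 2^(2*k) := by rw [pow_mul]; norm_num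
        _ ≤ (2*k+1) * ((2*k).choose k) := hsum ▸ hle
    have hnat' : ((4:ℝ))^k ≤ (2*(k:ℝ)+1) * (((2*k).choose k : ℕ) : ℝ) := by
      exact_mod_cast hnat
    have hpos : (0:ℝ) < (4:ℝ)^k := by positivity
    rw [div_le_iff₀ (by positivity : (0:ℝ) < 2*(k:ℝ)+1)]
    have hre : r k * (2*(k:ℝ)+1) = ((2*(k:ℝ)+1) * (((2*k).choose k : ℕ) : ℝ)) / (4:ℝ)^k := by
      rw [hrdef]
      rw [inv_pow]
      field_simp
    rw [hre, le_div_iff₀ hpos]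
    linarith
  have hρk : ρ^(2*k) < 1/(2*(k:ℝ)+1) := by
    rw [lt_div_iff₀ (by positivity)]
    calc ρ^(2*k) * (2*(k:ℝ)+1) = (2*(k:ℝ)+1) * ρ^(2*k) := by ring
      _ < 1/2 := hkρ
      _ < 1 := by norm_num
  -- the final polynomial
  set p : Polynomial ℂ := Polynomial.C (((1 + δ*ρ^(2*k) : ℝ)) : ℂ) - Polynomial.C ((δ : ℝ):ℂ) * P with hpdef
  have hev : ∀ θ : ℝ, (p.eval (Complex.exp (↑θ * Complex.I))).re
      = (1 + δ*ρ^(2*k)) - δ * (Real.cos (θ/2))^(2*k) := by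
    intro θ
    rw [hpdef, Polynomial.eval_sub, Polynomial.eval_mul, Polynomial.eval_C, Polynomial.eval_C,
      Complex.sub_re, Complex.re_ofReal_mul, hPre θ, Complex.ofReal_re]
  have hcossq : ∀ θ : ℝ, 0 ≤ (Real.cos (θ/2))^(2*k) ∧ (Real.cos (θ/2))^(2*k) ≤ 1 := by
    intro θ
    constructor
    · rw [pow_mul]
      positivity
    · rw [pow_mul]
      refine pow_le_one₀ (by positivity) ?_
      have := Real.cos_sq_le_one (θ/2)
      nlinarith [sq_nonneg (Real.cos (θ/2))]
  refine ⟨p, ?_, ?_, ?_⟩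
  · intro θ
    rw [hev θ]
    have h1 := (hcossq θ).2
    have h2 : 0 ≤ δ*ρ^(2*k) := by positivity
    nlinarith
  · intro θ hαθ hθπ
    rw [hev θ]
    have hcc : (Real.cos (θ/2))^(2*k) ≤ ρ^(2*k) := by
      have heq : Real.cos (θ/2) = Real.cos (|θ|/2) := by
        rcases abs_cases θ with ⟨h1, _⟩ | ⟨h1, _⟩
        · rw [h1]
        · rw [h1, show -θ/2 = -(θ/2) from by ring, Real.cos_neg]
      have h0 : 0 ≤ Real.cos (|θ|/2) := by
        refine Real.cos_nonneg_of_mem_Icc ⟨by linarith [abs_nonneg θ], by linarith⟩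
      have hle : Real.cos (|θ|/2) ≤ ρ := by
        rw [hρdef]
        rcases eq_or_lt_of_le (show α/2 ≤ |θ|/2 by linarith) with h | h
        · rw [← h]
        · exact le_of_lt (Real.cos_lt_cos_of_nonneg_of_le_pi (by linarith) (by linarith) h)
      rw [heq]
      exact pow_le_pow_left₀ h0 hle _
    have h2 : 0 ≤ δ := hδ.le
    nlinarith
  · have hp0 : (p.eval 0).re = (1 + δ*ρ^(2*k)) - δ * r k := by
      rw [hpdef, Polynomial.eval_sub, Polynomial.eval_mul, Polynomial.eval_C, Polynomial.eval_C,
        Complex.sub_re, Complex.re_ofReal_mul, hP0, Complex.ofReal_re]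
    rw [hp0]
    have : ρ^(2*k) < r k := lt_of_lt_of_le hρk hrk
    nlinarith

end ArcPoly

section StarPsh
variable {E : Type*} [NormedAddCommGroup E] [NormedSpace ℂ E]

/-- An open set absorbs small joint perturbations of `(lam, y) ↦ y + lam • b`. -/
theorem open_absorb {V : Set E} (hV : IsOpen V) (ν : ℂ) (a b : E) (h : a + ν • b ∈ V) :
    ∃ s : ℝ, 0 < s ∧ ∀ (μ : ℂ) (y : E), dist μ ν < s → dist y a < s → y + μ • b ∈ V := by
  have hc : Continuous (fun q : ℂ × E => q.2 + q.1 • b) :=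
    continuous_snd.add (continuous_fst.smul continuous_const)
  have hopen : IsOpen ((fun q : ℂ × E => q.2 + q.1 • b) ⁻¹' V) := hV.preimage hc
  have hmem : (ν, a) ∈ ((fun q : ℂ × E => q.2 + q.1 • b) ⁻¹' V) := h
  rcases Metric.isOpen_iff.1 hopen _ hmem with ⟨s, hs, hball⟩
  refine ⟨s, hs, fun μ y hμ hy => ?_⟩
  have : ((μ, y) : ℂ × E) ∈ Metric.ball (ν, a) s := by
    rw [Metric.mem_ball, Prod.dist_eq]
    exact max_lt hμ hy
  exact hball this

theorem relStar_psh {B K : Set E} (hK : IsOpen K) :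
    PlurisubharmonicOn (fun x => ((relExtremalStar B K x : ℝ) : EReal)) K := by
  refine ⟨usc_coe (relStar_usc hK), ?_⟩
  intro a b hdisc p hcirc lam₀ hlam₀
  have hcircR : ∀ ν : ℂ, ‖ν‖ = 1 → relExtremalStar B K (a + ν • b) ≤ (p.eval ν).re := by
    intro ν hν
    have h1 : ((relExtremalStar B K (a + ν • b) : ℝ) : EReal) ≤ (((p.eval ν).re : ℝ) : EReal) :=
      hcirc ν hν
    exact_mod_cast h1
  show ((relExtremalStar B K (a + lam₀ • b) : ℝ) : EReal) ≤ (((p.eval lam₀).re : ℝ) : EReal)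
  have hp0 : ∀ ν : ℂ, ‖ν‖ = 1 → 0 ≤ (p.eval ν).re := fun ν hν =>
    le_trans (relStar_nonneg (hdisc ν (le_of_eq hν)) hK) (hcircR ν hν)
  have hp0' : 0 ≤ (p.eval lam₀).re := minRe_circle p hp0 lam₀ hlam₀
  have goalR : relExtremalStar B K (a + lam₀ • b) ≤ (p.eval lam₀).re := by
    refine le_of_forall_pos_le_add ?_
    intro ε hε
    -- thickening of the closed disc inside K
    have hDisc : IsCompact ((fun lam : ℂ => a + lam • b) '' Metric.closedBall 0 1) :=
      (isCompact_closedBall (0:ℂ) 1).image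
        (continuous_const.add (continuous_id.smul continuous_const))
    have hDiscK : ((fun lam : ℂ => a + lam • b) '' Metric.closedBall 0 1) ⊆ K := by
      rintro _ ⟨lam, hlam, rfl⟩
      exact hdisc lam (by simpa using hlam)
    obtain ⟨δ₁, hδ₁, hth⟩ := hDisc.exists_thickening_subset_open hK hDiscK
    -- per-circle-point bounds
    have hper : ∀ ν : ℂ, ‖ν‖ = 1 → ∃ s : ℝ, 0 < s ∧ ∀ (μ : ℂ) (y : E),
        dist μ ν < s → dist y a < s → relExtremal B K (y + μ • b) ≤ (p.eval μ).re + ε := by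
      intro ν hν
      have hmemK : a + ν • b ∈ K := hdisc ν (le_of_eq hν)
      have hlt : relExtremalStar B K (a + ν • b) < (p.eval ν).re + ε/2 :=
        lt_of_le_of_lt (hcircR ν hν) (by linarith)
      rcases relStar_lt hK hmemK hlt with ⟨V, hVopen, hVmem, t, htlt, hVh, _⟩
      rcases open_absorb (hVopen.inter hK) ν a b ⟨hVmem, hmemK⟩ with ⟨s₁, hs₁, habs⟩
      have hcont : ContinuousAt (fun μ : ℂ => (p.eval μ).re) ν := by
        have : Continuous (fun μ : ℂ => (p.eval μ).re) :=
          Complex.continuous_re.comp p.continuous_aeval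
        exact this.continuousAt
      rcases Metric.continuousAt_iff.1 hcont (ε/2) (by linarith) with ⟨s₂, hs₂, hcnt⟩
      refine ⟨min s₁ s₂, lt_min hs₁ hs₂, fun μ y hμ hy => ?_⟩
      have hin : y + μ • b ∈ V ∩ K := habs μ y (lt_of_lt_of_le hμ (min_le_left _ _)) (lt_of_lt_of_le hy (min_le_left _ _))
      have h1 : relExtremal B K (y + μ • b) ≤ t := hVh _ hin
      have h2 : |(p.eval μ).re - (p.eval ν).re| < ε/2 := by
        have := hcnt (show dist μ ν < s₂ from lt_of_lt_of_le hμ (min_le_right _ _))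
        rwa [Real.dist_eq] at this
      have h3 : (p.eval ν).re < (p.eval μ).re + ε/2 := by
        have := abs_lt.1 h2
        linarith [this.1]
      linarith
    -- extract a finite subcover of the circle
    choose! s hs hsbound using hper
    have hcover : Metric.sphere (0:ℂ) 1 ⊆
        ⋃ ν : Metric.sphere (0:ℂ) 1, Metric.ball (ν : ℂ) (s ν) := by
      intro ν hν
      exact Set.mem_iUnion.2 ⟨⟨ν, hν⟩, Metric.mem_ball_self (hs ν (by simpa using hν))⟩
    obtain ⟨T, hT⟩ := (isCompact_sphere (0:ℂ) 1).elim_finite_subcover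
      (fun ν : Metric.sphere (0:ℂ) 1 => Metric.ball (ν : ℂ) (s ν))
      (fun ν => Metric.isOpen_ball) hcover
    have hTne : T.Nonempty := by
      by_contra hemp
      rw [Finset.not_nonempty_iff_eq_empty] at hemp
      have h1 : (1:ℂ) ∈ Metric.sphere (0:ℂ) 1 := by simp
      have := hT h1
      simp [hemp] at this
    obtain ⟨ν₀, hν₀T, hν₀min⟩ := T.exists_min_image (fun ν => s ν) hTne
    set δ := min δ₁ (s ν₀) with hδdef
    have hδpos : 0 < δ := lt_min hδ₁ (hs ν₀ (by simpa using ν₀.2))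
    -- the key uniform estimate near the center
    have hkey : ∀ y : E, dist y a < δ → relExtremal B K (y + lam₀ • b) ≤ (p.eval lam₀).re + ε := by
      intro y hy
      have hydisc : ∀ μ : ℂ, ‖μ‖ ≤ 1 → y + μ • b ∈ K := by
        intro μ hμ
        refine hth ?_
        rw [Metric.mem_thickening_iff]
        refine ⟨a + μ • b, ⟨μ, by simpa using hμ, rfl⟩, ?_⟩
        have heq : dist (y + μ • b) (a + μ • b) = dist y a := by
          rw [dist_eq_norm, dist_eq_norm]
          congr 1
          abel
        rw [heq]
        exact lt_of_lt_of_le hy (min_le_left _ _)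
      refine relExtremal_le (by positivity) ?_
      intro u hupsh hu1 hu0
      have hucirc : ∀ μ : ℂ, ‖μ‖ = 1 →
          ((u (y + μ • b) : ℝ) : EReal) ≤ ((((p + Polynomial.C (ε:ℂ)).eval μ).re : ℝ) : EReal) := by
        intro μ hμ
        have hμT : ∃ ν ∈ T, μ ∈ Metric.ball (ν : ℂ) (s ν) := by
          have := hT (show μ ∈ Metric.sphere (0:ℂ) 1 by simpa using hμ)
          simpa using this
        obtain ⟨ν, hνT, hμν⟩ := hμT
        have hsν : s ν₀ ≤ s ν := hν₀min ν hνT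
        have hbound : relExtremal B K (y + μ • b) ≤ (p.eval μ).re + ε := by
          refine hsbound (ν : ℂ) (by simpa using ν.2) μ y (by simpa using hμν) ?_
          exact lt_of_lt_of_le hy (le_trans (min_le_right _ _) hsν)
        have humem : u (y + μ • b) ≤ relExtremal B K (y + μ • b) :=
          le_relExtremal hupsh hu1 hu0 (hydisc μ (le_of_eq hμ))
        have : u (y + μ • b) ≤ ((p + Polynomial.C (ε:ℂ)).eval μ).re := by
          rw [Polynomial.eval_add, Polynomial.eval_C, Complex.add_re, Complex.ofReal_re]
          linarith
        exact_mod_cast this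
      have := hupsh.2 y b hydisc (p + Polynomial.C (ε:ℂ)) hucirc lam₀ hlam₀
      have hre : ((p + Polynomial.C (ε:ℂ)).eval lam₀).re = (p.eval lam₀).re + ε := by
        rw [Polynomial.eval_add, Polynomial.eval_C, Complex.add_re, Complex.ofReal_re]
      rw [hre] at this
      have h2 : ((u (y + lam₀ • b) : ℝ) : EReal) ≤ (((p.eval lam₀).re + ε : ℝ) : EReal) := this
      exact_mod_cast h2
    -- conclude via the limsup characterization
    have hcen : a + lam₀ • b ∈ K := hdisc lam₀ hlam₀.le
    rw [relStar_eq]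
    refine csInf_le (starSet_bddBelow hcen hK) ?_
    have hball : Metric.ball (a + lam₀ • b) δ ∈ nhdsWithin (a + lam₀ • b) K :=
      mem_nhdsWithin_of_mem_nhds (Metric.ball_mem_nhds _ hδpos)
    filter_upwards [hball] with y' hy'
    have : y' = (y' - lam₀ • b) + lam₀ • b := by abel
    rw [this]
    refine hkey (y' - lam₀ • b) ?_
    have heq2 : dist (y' - lam₀ • b) a = dist y' (a + lam₀ • b) := by
      rw [dist_eq_norm, dist_eq_norm]
      congr 1
      abel
    rw [heq2]
    exact hy'
  exact_mod_cast goalR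

end StarPsh

section MaxPrinciple
variable {E : Type*} [NormedAddCommGroup E] [NormedSpace ℂ E]

theorem psh_eq_one_ball {v : E → ℝ} {K : Set E} (hK : IsOpen K)
    (hpsh : PlurisubharmonicOn (fun x => ((v x : ℝ) : EReal)) K)
    (hle : ∀ x ∈ K, v x ≤ 1) {x : E} (hx : x ∈ K) (hv : v x = 1)
    {r : ℝ} (hr : Metric.ball x r ⊆ K) : ∀ y ∈ Metric.ball x r, v y = 1 := by
  intro y hy
  by_contra hne
  set b := y - x with hb
  have hxb : x + (1:ℂ) • b = y := by rw [one_smul, hb]; abel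
  have hx0b : x + (0:ℂ) • b = x := by rw [zero_smul, add_zero]
  have hdisc : ∀ lam : ℂ, ‖lam‖ ≤ 1 → x + lam • b ∈ K := by
    intro lam hlam
    refine hr ?_
    rw [Metric.mem_ball, dist_eq_norm]
    have h1 : ‖x + lam • b - x‖ = ‖lam‖ * ‖b‖ := by
      rw [show x + lam • b - x = lam • b from by abel, norm_smul]
    rw [h1]
    have h2 : ‖b‖ < r := by
      rw [hb, ← dist_eq_norm]
      exact Metric.mem_ball.1 hy
    calc ‖lam‖ * ‖b‖ ≤ 1 * ‖b‖ := mul_le_mul_of_nonneg_right hlam (norm_nonneg b)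
      _ = ‖b‖ := one_mul _
      _ < r := h2
  have hyK : y ∈ K := hr hy
  have hvy : v y < 1 := lt_of_le_of_ne (hle y hyK) hne
  set δ := (1 - v y)/2 with hδdef
  have hδpos : 0 < δ := by rw [hδdef]; linarith
  have hvyδ : v y + δ = 1 - δ := by rw [hδdef]; ring
  have husc := hpsh.1 y hyK ((v y + δ : ℝ) : EReal)
    (by show ((v y : ℝ) : EReal) < ((v y + δ : ℝ) : EReal)
        exact_mod_cast lt_add_of_pos_right (v y) hδpos)
  rcases mem_nhdsWithin.1 husc with ⟨V, hVopen, hyV, hV⟩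
  obtain ⟨α₀, hα₀, harc⟩ : ∃ α₀ : ℝ, 0 < α₀ ∧
      ∀ θ : ℝ, |θ| < α₀ → x + Complex.exp (↑θ * Complex.I) • b ∈ V := by
    have hc : Continuous (fun θ : ℝ => x + Complex.exp (↑θ * Complex.I) • b) := by
      refine continuous_const.add (Continuous.smul ?_ continuous_const)
      exact Complex.continuous_exp.comp ((Complex.continuous_ofReal).mul continuous_const)
    have h0 : (fun θ : ℝ => x + Complex.exp (↑θ * Complex.I) • b) 0 ∈ V := by
      simp only [Complex.ofReal_zero, zero_mul, Complex.exp_zero]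
      rw [hxb]
      exact hyV
    have hpre := hc.continuousAt (x := 0) |>.preimage_mem_nhds (hVopen.mem_nhds h0)
    rcases Metric.mem_nhds_iff.1 hpre with ⟨α₀, hα₀, hsub⟩
    refine ⟨α₀, hα₀, fun θ hθ => hsub ?_⟩
    rw [Metric.mem_ball, Real.dist_eq, sub_zero]
    exact hθ
  have hπ := Real.pi_pos
  set α := min (α₀/2) (Real.pi/2) with hαdef
  have hα0 : 0 < α := lt_min (by linarith) (by linarith)
  have hαπ : α < Real.pi := lt_of_le_of_lt (min_le_right _ _) (by linarith)
  obtain ⟨p, hp1, hp2, hp3⟩ := arc_poly hα0 hαπ hδpos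
  have hcirc : ∀ lam : ℂ, ‖lam‖ = 1 →
      ((v (x + lam • b) : ℝ) : EReal) ≤ (((p.eval lam).re : ℝ) : EReal) := by
    intro lam hlam
    have hlam' : lam = Complex.exp (↑lam.arg * Complex.I) := by
      conv_lhs => rw [← Complex.norm_mul_exp_arg_mul_I lam]
      rw [show ‖lam‖ = 1 from hlam, Complex.ofReal_one,
        one_mul]
    set θ := lam.arg with hθdef
    have hθπ : |θ| ≤ Real.pi := Complex.abs_arg_le_pi lam
    have hreal : v (x + lam • b) ≤ (p.eval lam).re := by
      rcases lt_or_ge |θ| α with hsml | hbig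
      · -- inside the arc : v is small
        have hmem : x + lam • b ∈ V := by
          rw [hlam']
          exact harc θ (lt_of_lt_of_le hsml (le_trans (min_le_left _ _) (by linarith)))
        have hmemK : x + lam • b ∈ K := hdisc lam (le_of_eq hlam)
        have hvsmall : ((v (x + lam • b) : ℝ) : EReal) < ((v y + δ : ℝ) : EReal) :=
          hV ⟨hmem, hmemK⟩
        have hvs : v (x + lam • b) < v y + δ := by exact_mod_cast hvsmall
        rw [hvyδ] at hvs
        have := hp1 θ
        rw [← hlam'] at this
        linarith
      · -- outside the arc : Re p ≥ 1
        have := hp2 θ hbig hθπ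
        rw [← hlam'] at this
        have hvle := hle _ (hdisc lam (le_of_eq hlam))
        linarith
    exact_mod_cast hreal
  have hconc := hpsh.2 x b hdisc p hcirc 0 (by norm_num)
  rw [hx0b] at hconc
  have hconcR : v x ≤ (p.eval 0).re := by
    have h2 : ((v x : ℝ) : EReal) ≤ (((p.eval 0).re : ℝ) : EReal) := hconc
    exact_mod_cast h2
  rw [hv] at hconcR
  linarith

theorem psh_eq_one_connected {v : E → ℝ} {K : Set E} (hK : IsOpen K)
    (hKconn : IsPreconnected K)
    (hpsh : PlurisubharmonicOn (fun x => ((v x : ℝ) : EReal)) K)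
    (hle : ∀ x ∈ K, v x ≤ 1) {x₀ : E} (hx₀ : x₀ ∈ K) (hv : v x₀ = 1) :
    ∀ x ∈ K, v x = 1 := by
  by_contra hcon
  push_neg at hcon
  obtain ⟨x₁, hx₁K, hx₁⟩ := hcon
  set S := {x | x ∈ K ∧ v x = 1} with hSdef
  have hSopen : IsOpen S := by
    rw [Metric.isOpen_iff]
    intro x hx
    rcases Metric.isOpen_iff.1 hK x hx.1 with ⟨r, hrpos, hball⟩
    exact ⟨r, hrpos, fun y hy =>
      ⟨hball hy, psh_eq_one_ball hK hpsh hle hx.1 hx.2 hball y hy⟩⟩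
  have hU2 : ∀ x ∈ K \ S, ∃ V : Set E, IsOpen V ∧ x ∈ V ∧ ∀ y ∈ V ∩ K, v y < 1 := by
    intro x hx
    have hvx : v x < 1 := lt_of_le_of_ne (hle x hx.1) (fun h => hx.2 ⟨hx.1, h⟩)
    have husc := hpsh.1 x hx.1 ((1:ℝ) : EReal)
      (by show ((v x : ℝ) : EReal) < ((1:ℝ) : EReal); exact_mod_cast hvx)
    rcases mem_nhdsWithin.1 husc with ⟨V, hVo, hxV, hVlt⟩
    refine ⟨V, hVo, hxV, fun y hy => ?_⟩
    have h2 : ((v y : ℝ) : EReal) < ((1:ℝ) : EReal) := hVlt hy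
    exact_mod_cast h2
  choose! V hVo hVmem hVlt using hU2
  set U₂ := ⋃ x ∈ K \ S, V x with hU₂def
  have hU₂open : IsOpen U₂ := isOpen_biUnion (fun x hx => hVo x hx)
  have hcover : K ⊆ S ∪ U₂ := by
    intro x hx
    by_cases hxS : x ∈ S
    · exact Or.inl hxS
    · exact Or.inr (Set.mem_biUnion ⟨hx, hxS⟩ (hVmem x ⟨hx, hxS⟩))
  have hne1 : (K ∩ S).Nonempty := ⟨x₀, hx₀, hx₀, hv⟩
  have hne2 : (K ∩ U₂).Nonempty := by
    have hx₁S : x₁ ∈ K \ S := ⟨hx₁K, fun h => hx₁ h.2⟩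
    exact ⟨x₁, hx₁K, Set.mem_biUnion hx₁S (hVmem x₁ hx₁S)⟩
  obtain ⟨w, hwK, hwS, hwU₂⟩ := hKconn S U₂ hSopen hU₂open hcover hne1 hne2
  rcases Set.mem_iUnion₂.1 hwU₂ with ⟨x, hx, hwV⟩
  exact absurd hwS.2 (ne_of_lt (hVlt x hx w ⟨hwV, hwK⟩))

end MaxPrinciple

section Glue
variable {E : Type*} [NormedAddCommGroup E] [NormedSpace ℂ E]

theorem sublevel_open {B K : Set E} (hK : IsOpen K) (c' : ℝ) :
    IsOpen {x ∈ K | relExtremalStar B K x < c'} := by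
  rw [isOpen_iff_forall_mem_open]
  intro x hx
  rcases relStar_lt hK hx.1 hx.2 with ⟨V, hVo, hxV, t, htc, _, hVstar⟩
  exact ⟨V ∩ K, fun y hy => ⟨hy.2, lt_of_le_of_lt (hVstar y hy) htc⟩,
    hVo.inter hK, hxV, hx.1⟩

theorem component_reaches {B K : Set E} (hK : IsOpen K)
    (hBzero : ∀ x ∈ B, relExtremalStar B K x = 0)
    {z : E} (hz : z ∈ K) {c' : ℝ} (hc'1 : c' ≤ 1)
    (hzlt : relExtremalStar B K z < c') :
    ∃ b ∈ B, b ∈ connectedComponentIn {x ∈ K | relExtremalStar B K x < c'} z := by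
  classical
  by_contra hcon
  push_neg at hcon
  set O : Set E := {x ∈ K | relExtremalStar B K x < c'} with hO
  have hOopen : IsOpen O := sublevel_open hK c'
  set U : Set E := connectedComponentIn O z with hU
  have hzO : z ∈ O := ⟨hz, hzlt⟩
  have hUopen : IsOpen U := hOopen.connectedComponentIn
  have hUO : U ⊆ O := connectedComponentIn_subset O z
  have hUK : U ⊆ K := fun x hx => (hUO hx).1
  have hcon' : ∀ x ∈ B, x ∉ U := hcon
  -- frontier points of U inside K carry the barrier bound
  have hfront : ∀ x, x ∈ closure U → x ∈ K → x ∉ U → c' ≤ relExtremalStar B K x := by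
    intro x hxcl hxK hxU
    by_contra hlt
    push_neg at hlt
    have hxO : x ∈ O := ⟨hxK, hlt⟩
    have hins : insert x U ⊆ U := by
      refine IsPreconnected.subset_connectedComponentIn ?_
        (Set.mem_insert_iff.2 (Or.inr (mem_connectedComponentIn hzO))) ?_
      · refine IsPreconnected.subset_closure (isPreconnected_connectedComponentIn)
          (Set.subset_insert x U) ?_
        intro y hy
        rcases Set.mem_insert_iff.1 hy with rfl | hyU
        · exact hxcl
        · exact subset_closure hyU
      · intro y hy
        rcases Set.mem_insert_iff.1 hy with rfl | hyU
        · exact hxO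
        · exact hUO hyU
    exact hxU (hins (Set.mem_insert x U))
  -- the glued competitor
  obtain ⟨g, hgdef⟩ : ∃ g : E → ℝ, ∀ y,
      g y = if y ∈ U then max (relExtremalStar B K y) c' else relExtremalStar B K y :=
    ⟨fun y => if y ∈ U then max (relExtremalStar B K y) c' else relExtremalStar B K y,
      fun _ => rfl⟩
  have hgv : ∀ x, relExtremalStar B K x ≤ g x := by
    intro x
    rw [hgdef]
    split
    · exact le_max_left _ _
    · exact le_refl _
  have hg1 : ∀ x ∈ K, g x ≤ 1 := by
    intro x hx
    rw [hgdef]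
    split
    · exact max_le (relStar_le_one hx hK) hc'1
    · exact relStar_le_one hx hK
  have hg0 : ∀ x ∈ B, g x ≤ 0 := by
    intro x hx
    rw [hgdef, if_neg (hcon' x hx), hBzero x hx]
  have hvusc : UpperSemicontinuousOn (relExtremalStar B K) K := relStar_usc hK
  have hgusc : UpperSemicontinuousOn g K := by
    intro x hxK t ht
    by_cases hxcl : x ∈ closure U
    · have hc't : c' < t := by
        by_cases hxU : x ∈ U
        · have h1 : c' ≤ g x := by rw [hgdef, if_pos hxU]; exact le_max_right _ _
          exact lt_of_le_of_lt h1 ht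
        · have h2 := hfront x hxcl hxK hxU
          rw [hgdef, if_neg hxU] at ht
          exact lt_of_le_of_lt h2 ht
      have hvx : relExtremalStar B K x < t := lt_of_le_of_lt (hgv x) ht
      filter_upwards [hvusc x hxK t hvx] with y hy
      rw [hgdef]
      split
      · exact max_lt hy hc't
      · exact hy
    · rw [hgdef, if_neg (fun h => hxcl (subset_closure h))] at ht
      have hUc : ∀ᶠ y in nhdsWithin x K, y ∉ U := by
        have hcl : IsOpen (closure U)ᶜ := isClosed_closure.isOpen_compl
        filter_upwards [mem_nhdsWithin_of_mem_nhds (hcl.mem_nhds hxcl)] with y hy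
        exact fun hyU => hy (subset_closure hyU)
      filter_upwards [hvusc x hxK t ht, hUc] with y hy1 hy2
      rw [hgdef, if_neg hy2]
      exact hy1
  have hgpsh : PlurisubharmonicOn (fun x => ((g x : ℝ) : EReal)) K := by
    refine ⟨usc_coe hgusc, ?_⟩
    intro a b hdisc p hcirc lam₀ hlam₀
    have hcircR : ∀ ν : ℂ, ‖ν‖ = 1 → g (a + ν • b) ≤ (p.eval ν).re := by
      intro ν hν
      have h1 : ((g (a + ν • b) : ℝ) : EReal) ≤ (((p.eval ν).re : ℝ) : EReal) := hcirc ν hν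
      exact_mod_cast h1
    have hvin : ∀ μ : ℂ, ‖μ‖ < 1 → relExtremalStar B K (a + μ • b) ≤ (p.eval μ).re := by
      have hp := (relStar_psh (B := B) hK).2 a b hdisc p ?_
      · intro μ hμ
        have h1 : ((relExtremalStar B K (a + μ • b) : ℝ) : EReal)
            ≤ (((p.eval μ).re : ℝ) : EReal) := hp μ hμ
        exact_mod_cast h1
      · intro ν hν
        show ((relExtremalStar B K (a + ν • b) : ℝ) : EReal) ≤ (((p.eval ν).re : ℝ) : EReal)
        have := le_trans (hgv (a + ν • b)) (hcircR ν hν)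
        exact_mod_cast this
    show ((g (a + lam₀ • b) : ℝ) : EReal) ≤ (((p.eval lam₀).re : ℝ) : EReal)
    by_cases hin : a + lam₀ • b ∈ U
    · set OL : Set ℂ := {μ : ℂ | ‖μ‖ < 1 ∧ a + μ • b ∈ U} with hOL
      have hmap : Continuous (fun ν : ℂ => a + ν • b) :=
        continuous_const.add (continuous_id.smul continuous_const)
      have hOLopen : IsOpen OL := by
        have h1 : IsOpen {μ : ℂ | ‖μ‖ < 1} := isOpen_lt continuous_norm continuous_const
        exact h1.inter (hUopen.preimage hmap)
      have hOLsub : OL ⊆ Metric.closedBall (0:ℂ) 1 := by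
        intro ν hν
        rw [Metric.mem_closedBall, dist_zero_right]
        exact hν.1.le
      have hOLbdd : Bornology.IsBounded OL :=
        (Metric.isBounded_closedBall (x := (0:ℂ)) (r := 1)).subset hOLsub
      have hfrontOL : ∀ μ ∈ frontier OL, c' ≤ (p.eval μ).re := by
        intro μ hμf
        rw [hOLopen.frontier_eq] at hμf
        obtain ⟨hμcl, hμnot⟩ := hμf
        have hμle : ‖μ‖ ≤ 1 := by
          have h := closure_minimal hOLsub Metric.isClosed_closedBall hμcl
          rw [Metric.mem_closedBall, dist_zero_right] at h
          exact h
        have hptcl : a + μ • b ∈ closure U := by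
          have hsub : OL ⊆ (fun ν : ℂ => a + ν • b) ⁻¹' (closure U) :=
            fun ν hν => subset_closure hν.2
          exact closure_minimal hsub (isClosed_closure.preimage hmap) hμcl
        have hptK : a + μ • b ∈ K := hdisc μ hμle
        by_cases hcase : a + μ • b ∈ U
        · have hμ1 : ‖μ‖ = 1 := by
            rcases lt_or_eq_of_le hμle with hlt | heq
            · exact absurd ⟨hlt, hcase⟩ hμnot
            · exact heq
          have h1 := hcircR μ hμ1
          have h2 : c' ≤ g (a + μ • b) := by
            rw [hgdef, if_pos hcase]; exact le_max_right _ _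
          linarith
        · have hvge := hfront _ hptcl hptK hcase
          rcases lt_or_eq_of_le hμle with hlt | heq
          · exact le_trans hvge (hvin μ hlt)
          · have h1 := hcircR μ heq
            rw [hgdef, if_neg hcase] at h1
            linarith
      have hc'le : c' ≤ (p.eval lam₀).re :=
        minRe_frontier hOLbdd p hfrontOL lam₀ ⟨hlam₀, hin⟩
      have hfin : g (a + lam₀ • b) ≤ (p.eval lam₀).re := by
        rw [hgdef, if_pos hin]
        exact max_le (hvin lam₀ hlam₀) hc'le
      exact_mod_cast hfin
    · have hfin : g (a + lam₀ • b) ≤ (p.eval lam₀).re := by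
        rw [hgdef, if_neg hin]; exact hvin lam₀ hlam₀
      exact_mod_cast hfin
  -- contradiction
  have hle1 : g z ≤ relExtremal B K z := le_relExtremal hgpsh hg1 hg0 hz
  have hle2 : relExtremal B K z ≤ relExtremalStar B K z := relExtremal_le_relStar hz hK
  have hgz : g z = max (relExtremalStar B K z) c' := by
    rw [hgdef, if_pos (mem_connectedComponentIn hzO)]
  rw [hgz] at hle1
  have : c' ≤ relExtremalStar B K z := le_trans (le_max_right _ _) (le_trans hle1 hle2)
  exact absurd hzlt (not_lt.2 this)

end Glue

section Omega
variable {E : Type*} [NormedAddCommGroup E] [NormedSpace ℂ E]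

/-- The defining set of `omegaExtr`. -/
def omegaSet (A D : Set E) (z : E) : Set ℝ :=
  { t : ℝ | ∃ K : Set E, IsOpen K ∧ IsCompact (closure K) ∧ closure K ⊆ D ∧
    z ∈ K ∧ t = relExtremalStar (A ∩ K) K z }

theorem omegaExtr_eq (A D : Set E) (z : E) : omegaExtr A D z = sInf (omegaSet A D z) := rfl

theorem omegaSet_bddBelow (A D : Set E) (z : E) : BddBelow (omegaSet A D z) := by
  refine ⟨0, ?_⟩
  rintro t ⟨K, hKo, _, _, hzK, rfl⟩
  exact relStar_nonneg hzK hKo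

theorem omegaSet_nonempty [ProperSpace E] {A D : Set E} (hD : IsOpen D) {z : E} (hz : z ∈ D) :
    (omegaSet A D z).Nonempty := by
  rcases Metric.isOpen_iff.1 hD z hz with ⟨r, hr, hball⟩
  refine ⟨_, Metric.ball z (r/2), Metric.isOpen_ball, ?_, ?_,
    Metric.mem_ball_self (by linarith), rfl⟩
  · exact (isCompact_closedBall z (r/2)).of_isClosed_subset isClosed_closure
      Metric.closure_ball_subset_closedBall
  · exact subset_trans Metric.closure_ball_subset_closedBall
      (subset_trans (Metric.closedBall_subset_ball (by linarith)) hball)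

theorem omega_le {A D : Set E} {z : E} {t : ℝ} (ht : t ∈ omegaSet A D z) :
    omegaExtr A D z ≤ t :=
  csInf_le (omegaSet_bddBelow A D z) ht

theorem omega_nonneg [ProperSpace E] {A D : Set E} (hD : IsOpen D) {z : E} (hz : z ∈ D) :
    0 ≤ omegaExtr A D z := by
  rw [omegaExtr_eq]
  refine le_csInf (omegaSet_nonempty hD hz) ?_
  rintro t ⟨K, hKo, _, _, hzK, rfl⟩
  exact relStar_nonneg hzK hKo

theorem omega_le_one [ProperSpace E] {A D : Set E} (hD : IsOpen D) {z : E} (hz : z ∈ D) :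
    omegaExtr A D z ≤ 1 := by
  obtain ⟨t, ht⟩ := omegaSet_nonempty (A := A) hD hz
  refine le_trans (omega_le ht) ?_
  obtain ⟨K, hKo, _, _, hzK, rfl⟩ := ht
  exact relStar_le_one hzK hKo

theorem omega_lt [ProperSpace E] {A D : Set E} (hD : IsOpen D) {z : E} (hz : z ∈ D) {c : ℝ}
    (h : omegaExtr A D z < c) :
    ∃ K : Set E, IsOpen K ∧ IsCompact (closure K) ∧ closure K ⊆ D ∧ z ∈ K ∧
      relExtremalStar (A ∩ K) K z < c := by
  rw [omegaExtr_eq] at h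
  rcases (csInf_lt_iff (omegaSet_bddBelow A D z) (omegaSet_nonempty hD hz)).1 h
    with ⟨t, ⟨K, hKo, hKc, hKD, hzK, rfl⟩, htc⟩
  exact ⟨K, hKo, hKc, hKD, hzK, htc⟩

theorem omega_zero_of_reg [ProperSpace E] {A D : Set E} (hD : IsOpen D)
    (hAreg : LocallyPluriregular A) {a : E} (ha : a ∈ A) (haD : a ∈ D) :
    omegaExtr A D a = 0 := by
  obtain ⟨t, ht⟩ := omegaSet_nonempty (A := A) hD haD
  obtain ⟨K, hKo, hKc, hKD, haK, rfl⟩ := ht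
  have h0 : relExtremalStar (A ∩ K) K a = 0 := hAreg a ha K hKo haK
  exact le_antisymm (h0 ▸ omega_le ⟨K, hKo, hKc, hKD, haK, rfl⟩) (omega_nonneg hD haD)

/-- tube around a path: connected relatively compact open neighborhood of two points. -/
theorem exists_connected_tube [ProperSpace E] {D : Set E} (hD : IsOpen D)
    (hDconn : IsPreconnected D) {x y : E} (hx : x ∈ D) (hy : y ∈ D) :
    ∃ K : Set E, IsOpen K ∧ IsPreconnected K ∧ IsCompact (closure K) ∧ closure K ⊆ D ∧
      x ∈ K ∧ y ∈ K := by
  have hDconn' : IsConnected D := ⟨⟨x, hx⟩, hDconn⟩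
  have hpath : IsPathConnected D := (hD.isConnected_iff_isPathConnected).1 hDconn'
  obtain ⟨γ, hγ⟩ := hpath.joinedIn x hx y hy
  have hCcomp : IsCompact (Set.range γ) := isCompact_range γ.continuous
  have hCD : Set.range γ ⊆ D := by rintro _ ⟨t, rfl⟩; exact hγ t
  have hCconn : IsConnected (Set.range γ) := isConnected_range γ.continuous
  obtain ⟨δ, hδpos, hδsub⟩ := hCcomp.exists_thickening_subset_open hD hCD
  have hhalf : 0 < δ/2 := by linarith
  have hCsub : Set.range γ ⊆ Metric.thickening (δ/2) (Set.range γ) :=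
    Metric.self_subset_thickening hhalf _
  refine ⟨Metric.thickening (δ/2) (Set.range γ), Metric.isOpen_thickening, ?_, ?_, ?_,
    hCsub ⟨0, by simp⟩, hCsub ⟨1, by simp⟩⟩
  · -- preconnected
    have hmem : ∀ s ∈ {S : Set E | ∃ c ∈ Set.range γ, S = Set.range γ ∪ Metric.ball c (δ/2)},
        x ∈ s := by
      rintro S ⟨c, hc, rfl⟩
      exact Or.inl ⟨0, by simp⟩
    have hpre : ∀ s ∈ {S : Set E | ∃ c ∈ Set.range γ, S = Set.range γ ∪ Metric.ball c (δ/2)},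
        IsPreconnected s := by
      rintro S ⟨c, hc, rfl⟩
      refine IsPreconnected.union c hc (Metric.mem_ball_self hhalf)
        hCconn.isPreconnected ?_
      exact (convex_ball c (δ/2)).isPreconnected
    have := isPreconnected_sUnion x _ hmem hpre
    have heq : ⋃₀ {S : Set E | ∃ c ∈ Set.range γ, S = Set.range γ ∪ Metric.ball c (δ/2)}
        = Metric.thickening (δ/2) (Set.range γ) := by
      rw [Metric.thickening_eq_biUnion_ball]
      ext w
      constructor
      · rintro ⟨S, ⟨c, hc, rfl⟩, hw⟩
        rcases hw with hw | hw
        · exact Set.mem_biUnion hw (Metric.mem_ball_self hhalf)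
        · exact Set.mem_biUnion hc hw
      · intro hw
        rcases Set.mem_iUnion₂.1 hw with ⟨c, hc, hw⟩
        exact ⟨Set.range γ ∪ Metric.ball c (δ/2), ⟨c, hc, rfl⟩, Or.inr hw⟩
    rwa [heq] at this
  · exact (hCcomp.cthickening).of_isClosed_subset isClosed_closure
      (Metric.closure_thickening_subset_cthickening _ _)
  · refine subset_trans (Metric.closure_thickening_subset_cthickening _ _) ?_
    exact subset_trans (Metric.cthickening_subset_thickening' hδpos (by linarith) _) hδsub

/-- ω < 1 throughout a domain (needs a locally pluriregular nonempty A). -/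
theorem omega_lt_one [ProperSpace E] {A D : Set E} (hD : IsOpen D) (hDconn : IsPreconnected D)
    (hA : A ⊆ D) (hAne : A.Nonempty) (hAreg : LocallyPluriregular A)
    {z : E} (hz : z ∈ D) : omegaExtr A D z < 1 := by
  obtain ⟨a, ha⟩ := hAne
  obtain ⟨K, hKo, hKconn, hKc, hKD, hzK, haK⟩ :=
    exists_connected_tube hD hDconn hz (hA ha)
  by_contra hge
  push_neg at hge
  have h1 : relExtremalStar (A ∩ K) K z ≤ 1 := relStar_le_one hzK hKo
  have h2 : 1 ≤ relExtremalStar (A ∩ K) K z :=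
    le_trans hge (omega_le ⟨K, hKo, hKc, hKD, hzK, rfl⟩)
  have heq1 : relExtremalStar (A ∩ K) K z = 1 := le_antisymm h1 h2
  have hall := psh_eq_one_connected hKo hKconn (relStar_psh hKo)
    (fun x hx => relStar_le_one hx hKo) hzK heq1
  have := hall a haK
  rw [hAreg a ha K hKo haK] at this
  exact absurd this (by norm_num)

end Omega

section Assembly
variable {E : Type*} [NormedAddCommGroup E] [NormedSpace ℂ E]

theorem pluripolar_empty : Pluripolar (∅ : Set E) := by
  refine ⟨fun _ => ((0:ℝ) : EReal), psh_const 0 Set.univ, ⟨0, by simp⟩, fun z hz => hz.elim⟩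

theorem nonempty_of_not_pluripolar {A : Set E} (h : ¬ Pluripolar A) : A.Nonempty := by
  rcases Set.eq_empty_or_nonempty A with rfl | h'
  · exact absurd pluripolar_empty h
  · exact h'

theorem omega_usc_aux [ProperSpace E] {A D : Set E} (hD : IsOpen D) {z : E} (hz : z ∈ D) {s : ℝ}
    (h : omegaExtr A D z < s) :
    ∃ W : Set E, IsOpen W ∧ z ∈ W ∧ ∀ x ∈ W, x ∈ D ∧ omegaExtr A D x < s := by
  obtain ⟨K, hKo, hKc, hKD, hzK, hlt⟩ := omega_lt hD hz h
  obtain ⟨V, hVo, hzV, t, hts, _, hVstar⟩ := relStar_lt hKo hzK hlt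
  refine ⟨V ∩ K, hVo.inter hKo, ⟨hzV, hzK⟩, ?_⟩
  intro x hx
  refine ⟨hKD (subset_closure hx.2), ?_⟩
  exact lt_of_le_of_lt
    (le_trans (omega_le ⟨K, hKo, hKc, hKD, hx.2, rfl⟩) (hVstar x hx)) hts

theorem slice_piece [ProperSpace E] {A D : Set E} (hD : IsOpen D)
    (hAreg : LocallyPluriregular A) {z : E} (hz : z ∈ D) {c : ℝ} (hc1 : c ≤ 1)
    (hzc : omegaExtr A D z < c) :
    ∃ S : Set E, IsPreconnected S ∧ z ∈ S ∧ (∃ a ∈ A, a ∈ S) ∧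
      ∀ x ∈ S, x ∈ D ∧ omegaExtr A D x < c := by
  obtain ⟨K, hKo, hKc, hKD, hzK, hlt⟩ := omega_lt hD hz hzc
  set c' : ℝ := (relExtremalStar (A ∩ K) K z + c)/2 with hc'def
  have hc'a : relExtremalStar (A ∩ K) K z < c' := by rw [hc'def]; linarith
  have hc'b : c' < c := by rw [hc'def]; linarith
  have hc'1 : c' ≤ 1 := le_trans hc'b.le hc1
  have hBzero : ∀ x ∈ A ∩ K, relExtremalStar (A ∩ K) K x = 0 :=
    fun x hx => hAreg x hx.1 K hKo hx.2
  obtain ⟨a, haAK, haU⟩ := component_reaches hKo hBzero hzK hc'1 hc'a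
  refine ⟨connectedComponentIn {x ∈ K | relExtremalStar (A ∩ K) K x < c'} z,
    isPreconnected_connectedComponentIn, mem_connectedComponentIn ⟨hzK, hc'a⟩,
    ⟨a, haAK.1, haU⟩, ?_⟩
  intro x hx
  have hxO := connectedComponentIn_subset _ _ hx
  refine ⟨hKD (subset_closure hxO.1), ?_⟩
  have h1 : omegaExtr A D x ≤ relExtremalStar (A ∩ K) K x :=
    omega_le ⟨K, hKo, hKc, hKD, hxO.1, rfl⟩
  exact lt_of_le_of_lt h1 (lt_trans hxO.2 hc'b)

theorem connected_of_pieces {X : Type*} [TopologicalSpace X] {s : Set X} {x₀ : X}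
    (hx₀ : x₀ ∈ s)
    (h : ∀ x ∈ s, ∃ t : Set X, t ⊆ s ∧ IsPreconnected t ∧ x ∈ t ∧ x₀ ∈ t) :
    IsConnected s := by
  refine ⟨⟨x₀, hx₀⟩, ?_⟩
  choose! t ht hpre hx hx0 using h
  have hpre' := isPreconnected_sUnion x₀ {S | ∃ x ∈ s, S = t x}
    (by rintro S ⟨x, hxs, rfl⟩; exact hx0 x hxs)
    (by rintro S ⟨x, hxs, rfl⟩; exact hpre x hxs)
  have heq : ⋃₀ {S | ∃ x ∈ s, S = t x} = s := by
    apply Set.Subset.antisymm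
    · rintro y ⟨S, ⟨x, hxs, rfl⟩, hy⟩
      exact ht x hxs hy
    · intro y hy
      exact ⟨t y, ⟨y, hy, rfl⟩, hx y hy⟩
  rwa [heq] at hpre'

end Assembly

/-- **Lemma 3.** Let `D ⊆ ℂⁿ`, `G ⊆ ℂᵐ` be domains and let `A ⊆ D`, `B ⊆ G` be
non-pluripolar, locally pluriregular sets.  Then
`X̂ = {(z,w) ∈ D × G : ω_{A,D}(z) + ω_{B,G}(w) < 1}` is a domain (open and connected). -/
theorem crossHat_isDomain {n m : ℕ}
    (D : Set (EuclideanSpace ℂ (Fin n))) (G : Set (EuclideanSpace ℂ (Fin m)))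
    (hD : IsOpen D) (hDconn : IsConnected D)
    (hG : IsOpen G) (hGconn : IsConnected G)
    (A : Set (EuclideanSpace ℂ (Fin n))) (B : Set (EuclideanSpace ℂ (Fin m)))
    (hAD : A ⊆ D) (hBG : B ⊆ G)
    (hAnp : ¬ Pluripolar A) (hBnp : ¬ Pluripolar B)
    (hAreg : LocallyPluriregular A) (hBreg : LocallyPluriregular B)
    (Xhat : Set (EuclideanSpace ℂ (Fin n) × EuclideanSpace ℂ (Fin m)))
    (hXhat : Xhat = {p | p.1 ∈ D ∧ p.2 ∈ G ∧
      omegaExtr A D p.1 + omegaExtr B G p.2 < 1}) :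
    IsOpen Xhat ∧ IsConnected Xhat := by
  have hDpre := hDconn.isPreconnected
  have hGpre := hGconn.isPreconnected
  obtain ⟨a₀, ha₀⟩ : A.Nonempty := nonempty_of_not_pluripolar hAnp
  obtain ⟨b₀, hb₀⟩ : B.Nonempty := nonempty_of_not_pluripolar hBnp
  have hωA0 : ∀ a ∈ A, omegaExtr A D a = 0 :=
    fun a ha => omega_zero_of_reg hD hAreg ha (hAD ha)
  have hωB0 : ∀ b ∈ B, omegaExtr B G b = 0 :=
    fun b hb => omega_zero_of_reg hG hBreg hb (hBG hb)
  have hωAlt1 : ∀ z ∈ D, omegaExtr A D z < 1 :=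
    fun z hz => omega_lt_one hD hDpre hAD ⟨a₀, ha₀⟩ hAreg hz
  have hωBlt1 : ∀ w ∈ G, omegaExtr B G w < 1 :=
    fun w hw => omega_lt_one hG hGpre hBG ⟨b₀, hb₀⟩ hBreg hw
  constructor
  · -- openness
    rw [hXhat, isOpen_iff_mem_nhds]
    rintro ⟨z, w⟩ ⟨hzD, hwG, hsum⟩
    set η : ℝ := (1 - (omegaExtr A D z + omegaExtr B G w))/2 with hηdef
    have hη : 0 < η := by rw [hηdef]; linarith
    obtain ⟨W₁, hW₁o, hzW₁, hW₁⟩ := omega_usc_aux hD hzD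
      (show omegaExtr A D z < omegaExtr A D z + η by linarith)
    obtain ⟨W₂, hW₂o, hwW₂, hW₂⟩ := omega_usc_aux hG hwG
      (show omegaExtr B G w < omegaExtr B G w + η by linarith)
    refine Filter.mem_of_superset
      (prod_mem_nhds (hW₁o.mem_nhds hzW₁) (hW₂o.mem_nhds hwW₂)) ?_
    rintro ⟨z', w'⟩ ⟨hz', hw'⟩
    obtain ⟨hz'D, hz'lt⟩ := hW₁ z' hz'
    obtain ⟨hw'G, hw'lt⟩ := hW₂ w' hw'
    refine ⟨hz'D, hw'G, ?_⟩
    have : omegaExtr A D z + η + (omegaExtr B G w + η) = 1 := by rw [hηdef]; ring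
    linarith
  · -- connectedness
    rw [hXhat]
    have hbase : ((a₀, b₀) : EuclideanSpace ℂ (Fin n) × EuclideanSpace ℂ (Fin m)) ∈
        {p : EuclideanSpace ℂ (Fin n) × EuclideanSpace ℂ (Fin m) |
          p.1 ∈ D ∧ p.2 ∈ G ∧ omegaExtr A D p.1 + omegaExtr B G p.2 < 1} := by
      refine ⟨hAD ha₀, hBG hb₀, ?_⟩
      rw [hωA0 a₀ ha₀, hωB0 b₀ hb₀]
      norm_num
    refine connected_of_pieces hbase ?_
    rintro ⟨z, w⟩ ⟨hzD, hwG, hsum⟩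
    have hA0z : 0 ≤ omegaExtr A D z := omega_nonneg hD hzD
    have hB0w : 0 ≤ omegaExtr B G w := omega_nonneg hG hwG
    have hcA : omegaExtr A D z < 1 - omegaExtr B G w := by linarith
    have hc1 : 1 - omegaExtr B G w ≤ 1 := by linarith
    obtain ⟨S₁, hS₁pre, hzS₁, ⟨a₁, ha₁A, ha₁S₁⟩, hS₁⟩ := slice_piece hD hAreg hzD hc1 hcA
    obtain ⟨S₂, hS₂pre, hwS₂, ⟨b₁, hb₁B, hb₁S₂⟩, hS₂⟩ :=
      slice_piece hG hBreg hwG (le_refl (1:ℝ)) (hωBlt1 w hwG)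
    refine ⟨(S₁ ×ˢ ({w} : Set (EuclideanSpace ℂ (Fin m))))
      ∪ (({a₁} : Set (EuclideanSpace ℂ (Fin n))) ×ˢ S₂)
      ∪ (D ×ˢ ({b₁} : Set (EuclideanSpace ℂ (Fin m))))
      ∪ (({a₀} : Set (EuclideanSpace ℂ (Fin n))) ×ˢ G), ?_, ?_, ?_, ?_⟩
    · -- subset of Xhat
      rintro ⟨x, y⟩ hxy
      rcases hxy with ((h1 | h2) | h3) | h4
      · obtain ⟨hxS₁, hy⟩ := h1
        have hy : y = w := hy
        obtain ⟨hxD, hxlt⟩ := hS₁ x hxS₁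
        refine ⟨hxD, by rw [hy]; exact hwG, ?_⟩
        show omegaExtr A D x + omegaExtr B G y < 1
        rw [hy]
        linarith
      · obtain ⟨hx, hyS₂⟩ := h2
        have hx : x = a₁ := hx
        obtain ⟨hyG, hylt⟩ := hS₂ y hyS₂
        refine ⟨by rw [hx]; exact hAD ha₁A, hyG, ?_⟩
        show omegaExtr A D x + omegaExtr B G y < 1
        rw [hx, hωA0 a₁ ha₁A]
        linarith
      · obtain ⟨hxD, hy⟩ := h3
        have hy : y = b₁ := hy
        refine ⟨hxD, by rw [hy]; exact hBG hb₁B, ?_⟩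
        show omegaExtr A D x + omegaExtr B G y < 1
        rw [hy, hωB0 b₁ hb₁B]
        have := hωAlt1 x hxD
        linarith
      · obtain ⟨hx, hyG⟩ := h4
        have hx : x = a₀ := hx
        refine ⟨by rw [hx]; exact hAD ha₀, hyG, ?_⟩
        show omegaExtr A D x + omegaExtr B G y < 1
        rw [hx, hωA0 a₀ ha₀]
        have := hωBlt1 y hyG
        linarith
    · -- preconnected
      have hP1 : IsPreconnected (S₁ ×ˢ ({w} : Set (EuclideanSpace ℂ (Fin m)))) :=
        hS₁pre.prod isPreconnected_singleton
      have hP2 : IsPreconnected (({a₁} : Set (EuclideanSpace ℂ (Fin n))) ×ˢ S₂) :=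
        isPreconnected_singleton.prod hS₂pre
      have hP3 : IsPreconnected (D ×ˢ ({b₁} : Set (EuclideanSpace ℂ (Fin m)))) :=
        hDpre.prod isPreconnected_singleton
      have hP4 : IsPreconnected (({a₀} : Set (EuclideanSpace ℂ (Fin n))) ×ˢ G) :=
        isPreconnected_singleton.prod hGpre
      have h12 := IsPreconnected.union (a₁, w)
        (Set.mem_prod.2 ⟨ha₁S₁, Set.mem_singleton w⟩)
        (Set.mem_prod.2 ⟨Set.mem_singleton a₁, hwS₂⟩) hP1 hP2
      have h123 := IsPreconnected.union (a₁, b₁)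
        (Set.mem_union_right _ (Set.mem_prod.2 ⟨Set.mem_singleton a₁, hb₁S₂⟩))
        (Set.mem_prod.2 ⟨hAD ha₁A, Set.mem_singleton b₁⟩) h12 hP3
      exact IsPreconnected.union (a₀, b₁)
        (Set.mem_union_right _ (Set.mem_prod.2 ⟨hAD ha₀, Set.mem_singleton b₁⟩))
        (Set.mem_prod.2 ⟨Set.mem_singleton a₀, hBG hb₁B⟩) h123 hP4
    · -- contains the point
      exact Set.mem_union_left _ (Set.mem_union_left _ (Set.mem_union_left _
        (Set.mem_prod.2 ⟨hzS₁, Set.mem_singleton w⟩)))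
    · -- contains the base point
      exact Set.mem_union_right _ (Set.mem_prod.2 ⟨Set.mem_singleton a₀, hBG hb₀⟩)
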